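/- (Similarity lower bound for the feedforward module.) Let N, D ≥ 1, let R > 1 and R₂ ≥ 0, and let W ∈ ℝ^{D×D} and X, X̃ ∈ ℝ^{N×D} satisfy ‖W‖ ≤ R and ‖X − X̃‖ ≤ R₂ in spectral norm. Set Y = X W and Ỹ = X̃ W, and assume ‖Y‖_F = ‖Ỹ‖_F = 1. Then the cosine similarity satisfies f(Y, Ỹ) = tr[Yᵀ Ỹ] ≥ 1 − (1/2)·R²·R₂²·min{N, D}. -/

import Mathlib

noncomputable def specNorm {m n : ℕ} (A : Matrix (Fin m) (Fin n) ℝ) : ℝ :=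
  ‖LinearMap.toContinuousLinearMap (Matrix.toEuclideanLin A)‖

noncomputable def frobNorm {m n : ℕ} (A : Matrix (Fin m) (Fin n) ℝ) : ℝ :=
  Real.sqrt (∑ i, ∑ j, (A i j) ^ 2)

open Matrix
open scoped Matrix.Norms.L2Operator

lemma specNorm_eq_l2 {m n : ℕ} (A : Matrix (Fin m) (Fin n) ℝ) : specNorm A = ‖A‖ := rfl

/-- Column bound: Frobenius norm squared ≤ (number of columns) * operator norm squared. -/
lemma frob_sq_le_card_mul {m n : ℕ} (A : Matrix (Fin m) (Fin n) ℝ) :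
    ∑ i, ∑ j, (A i j) ^ 2 ≤ (n : ℝ) * ‖A‖ ^ 2 := by
  rw [Finset.sum_comm]
  have hcol : ∀ j : Fin n, ∑ i, (A i j) ^ 2 ≤ ‖A‖ ^ 2 := by
    intro j
    have h1 : ‖(EuclideanSpace.equiv (Fin m) ℝ).symm (A *ᵥ Pi.single j 1)‖ ≤
        ‖A‖ * ‖(EuclideanSpace.equiv (Fin n) ℝ).symm (Pi.single j 1)‖ :=
      Matrix.l2_opNorm_mulVec A ((EuclideanSpace.equiv (Fin n) ℝ).symm (Pi.single j 1))
    have hb : ‖(EuclideanSpace.equiv (Fin n) ℝ).symm (Pi.single j (1:ℝ))‖ = 1 := by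
      rw [EuclideanSpace.norm_eq]
      simp [Pi.single_apply, apply_ite, Finset.sum_ite_eq']
    rw [hb, mul_one] at h1
    have h2 : ‖(EuclideanSpace.equiv (Fin m) ℝ).symm (A *ᵥ Pi.single j 1)‖ ^ 2 =
        ∑ i, (A i j) ^ 2 := by
      rw [EuclideanSpace.norm_eq, Real.sq_sqrt (by positivity)]
      simp [Real.norm_eq_abs, sq_abs]
    calc ∑ i, (A i j) ^ 2 = _ := h2.symm
      _ ≤ ‖A‖ ^ 2 := by
          have := norm_nonneg ((EuclideanSpace.equiv (Fin m) ℝ).symm (A *ᵥ Pi.single j 1))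
          nlinarith [norm_nonneg A]
  calc ∑ j, ∑ i, (A i j) ^ 2 ≤ ∑ _j : Fin n, ‖A‖ ^ 2 := Finset.sum_le_sum fun j _ => hcol j
    _ = (n : ℝ) * ‖A‖ ^ 2 := by simp [mul_comm]

lemma frob_sq_le_min {m n : ℕ} (A : Matrix (Fin m) (Fin n) ℝ) :
    ∑ i, ∑ j, (A i j) ^ 2 ≤ min (m : ℝ) (n : ℝ) * ‖A‖ ^ 2 := by
  rcases le_total (m : ℝ) (n : ℝ) with h | h
  · rw [min_eq_left h]
    have := frob_sq_le_card_mul Aᵀ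
    have hT : ‖Aᵀ‖ = ‖A‖ := by
      have := Matrix.l2_opNorm_conjTranspose A
      simpa [Matrix.conjTranspose_eq_transpose_of_trivial] using this
    rw [hT] at this
    rw [Finset.sum_comm]
    simpa [Matrix.transpose] using this
  · rw [min_eq_right h]
    exact frob_sq_le_card_mul A

/-- Similarity lower bound for the feedforward module: if ‖W‖ ≤ R, ‖X − X̃‖ ≤ R₂, and
Y = XW, Ỹ = X̃W have unit Frobenius norm, then tr[Yᵀ Ỹ] ≥ 1 − (1/2)·R²·R₂²·min{N,D}. -/
theorem stmt_11 (N D : ℕ) (hN : 1 ≤ N) (hD : 1 ≤ D) (R R₂ : ℝ) (hR : 1 < R) (hR₂ : 0 ≤ R₂)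
    (W : Matrix (Fin D) (Fin D) ℝ) (X Xt : Matrix (Fin N) (Fin D) ℝ)
    (hW : specNorm W ≤ R) (hdiff : specNorm (X - Xt) ≤ R₂)
    (hY : frobNorm (X * W) = 1) (hYt : frobNorm (Xt * W) = 1) :
    Matrix.trace ((X * W).transpose * (Xt * W)) ≥
      1 - (1 / 2) * R ^ 2 * R₂ ^ 2 * min (N : ℝ) (D : ℝ) := by
  set Y := X * W
  set Yt := Xt * W
  set A := Y - Yt with hA
  -- Frobenius norms squared are 1
  have hYsq : ∑ i, ∑ j, (Y i j) ^ 2 = 1 := by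
    have := congrArg (· ^ 2) hY
    simpa [frobNorm, Real.sq_sqrt (by positivity : (0:ℝ) ≤ ∑ i, ∑ j, (Y i j) ^ 2)] using this
  have hYtsq : ∑ i, ∑ j, (Yt i j) ^ 2 = 1 := by
    have := congrArg (· ^ 2) hYt
    simpa [frobNorm, Real.sq_sqrt (by positivity : (0:ℝ) ≤ ∑ i, ∑ j, (Yt i j) ^ 2)] using this
  -- trace formula
  have htr : Matrix.trace (Y.transpose * Yt) = ∑ i, ∑ j, Y i j * Yt i j := by
    simp [Matrix.trace, Matrix.diag, Matrix.mul_apply, Matrix.transpose_apply]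
    rw [Finset.sum_comm]
  -- expansion of the difference
  have hexp : ∑ i, ∑ j, (A i j) ^ 2 =
      2 - 2 * Matrix.trace (Y.transpose * Yt) := by
    rw [htr]
    have : ∀ i j, (A i j) ^ 2 = Y i j ^ 2 + Yt i j ^ 2 - 2 * (Y i j * Yt i j) := by
      intro i j; simp [hA, Matrix.sub_apply]; ring
    simp only [this, Finset.sum_sub_distrib, Finset.sum_add_distrib, ← Finset.mul_sum]
    rw [hYsq, hYtsq]; ring
  -- operator norm bound on A
  have hAeq : A = (X - Xt) * W := by rw [hA]; simp [Y, Yt, Matrix.sub_mul]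
  have hAop : ‖A‖ ≤ R₂ * R := by
    rw [hAeq]
    calc ‖(X - Xt) * W‖ ≤ ‖X - Xt‖ * ‖W‖ := Matrix.l2_opNorm_mul _ _
      _ ≤ R₂ * R := by
          have h1 : ‖X - Xt‖ ≤ R₂ := by rw [← specNorm_eq_l2]; exact hdiff
          have h2 : ‖W‖ ≤ R := by rw [← specNorm_eq_l2]; exact hW
          exact mul_le_mul h1 h2 (norm_nonneg _) hR₂
  have hAfrob : ∑ i, ∑ j, (A i j) ^ 2 ≤ min (N : ℝ) (D : ℝ) * (R₂ * R) ^ 2 := by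
    refine (frob_sq_le_min A).trans ?_
    have hmin : (0:ℝ) ≤ min (N : ℝ) (D : ℝ) := le_min (by positivity) (by positivity)
    have : ‖A‖ ^ 2 ≤ (R₂ * R) ^ 2 := by
      have := norm_nonneg A; nlinarith
    nlinarith
  -- conclude
  have := hexp
  nlinarith [hAfrob, hexp]
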